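/- With ρ(x,y) = 1 + x² + y², the weighted norm ‖L_{m,n}(t²+τ²; x,y) − (x²+y²)‖_ρ = sup_{(x,y)∈[0,1]×[0,∞)} |L_{m,n}(t²+τ²;x,y) − x² − y²| / (1+x²+y²) tends to 0 as m,n → ∞. -/

import Mathlib

open Real

lemma my_tsum_exp (r : ℝ) : ∑' k : ℕ, r ^ k / (Nat.factorial k : ℝ) = Real.exp r := by
  rw [Real.exp_eq_exp_ℝ, NormedSpace.exp_eq_tsum_div]

lemma my_shift1 (r : ℝ) (k : ℕ) :
    ((k : ℝ) + 1) * r ^ (k + 1) / (Nat.factorial (k + 1) : ℝ) =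
      r * (r ^ k / (Nat.factorial k : ℝ)) := by
  rw [Nat.factorial_succ]
  have h : (Nat.factorial k : ℝ) ≠ 0 := by positivity
  push_cast
  field_simp
  ring

lemma my_summable1 (r : ℝ) : Summable (fun k : ℕ => (k : ℝ) * r ^ k / (Nat.factorial k : ℝ)) := by
  apply (summable_nat_add_iff 1).mp
  have : (fun n : ℕ => ((n + 1 : ℕ) : ℝ) * r ^ (n + 1) / (Nat.factorial (n + 1) : ℝ)) =
      fun n : ℕ => r * (r ^ n / (Nat.factorial n : ℝ)) := by
    funext n; push_cast; exact my_shift1 r n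
  rw [this]
  exact (Real.summable_pow_div_factorial r).mul_left r

lemma my_tsum1 (r : ℝ) :
    ∑' k : ℕ, (k : ℝ) * r ^ k / (Nat.factorial k : ℝ) = r * Real.exp r := by
  rw [Summable.tsum_eq_zero_add (my_summable1 r)]
  simp only [Nat.cast_zero, zero_mul, zero_div, zero_add]
  have : (fun n : ℕ => ((n + 1 : ℕ) : ℝ) * r ^ (n + 1) / (Nat.factorial (n + 1) : ℝ)) =
      fun n : ℕ => r * (r ^ n / (Nat.factorial n : ℝ)) := by
    funext n; push_cast; exact my_shift1 r n
  rw [this, tsum_mul_left, my_tsum_exp]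

lemma my_summable2 (r : ℝ) :
    Summable (fun k : ℕ => (k : ℝ) ^ 2 * r ^ k / (Nat.factorial k : ℝ)) := by
  apply (summable_nat_add_iff 1).mp
  have : (fun n : ℕ => ((n + 1 : ℕ) : ℝ) ^ 2 * r ^ (n + 1) / (Nat.factorial (n + 1) : ℝ)) =
      fun n : ℕ => r * ((n : ℝ) * r ^ n / (Nat.factorial n : ℝ))
        + r * (r ^ n / (Nat.factorial n : ℝ)) := by
    funext n
    have h := my_shift1 r n
    push_cast
    push_cast at h
    calc ((n:ℝ)+1)^2 * r^(n+1)/(Nat.factorial (n+1) : ℝ)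
        = ((n:ℝ)+1) * (((n:ℝ)+1)*r^(n+1)/(Nat.factorial (n+1) : ℝ)) := by ring
      _ = ((n:ℝ)+1) * (r * (r^n/(Nat.factorial n : ℝ))) := by rw [h]
      _ = r * ((n:ℝ)*r^n/(Nat.factorial n : ℝ)) + r * (r^n/(Nat.factorial n : ℝ)) := by ring
  rw [this]
  exact ((my_summable1 r).mul_left r).add ((Real.summable_pow_div_factorial r).mul_left r)

lemma my_tsum2 (r : ℝ) :
    ∑' k : ℕ, (k : ℝ) ^ 2 * r ^ k / (Nat.factorial k : ℝ) = (r ^ 2 + r) * Real.exp r := by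
  rw [Summable.tsum_eq_zero_add (my_summable2 r)]
  simp only [Nat.cast_zero, zero_pow, zero_mul, zero_div, zero_add]
  have : (fun n : ℕ => ((n + 1 : ℕ) : ℝ) ^ 2 * r ^ (n + 1) / (Nat.factorial (n + 1) : ℝ)) =
      fun n : ℕ => r * ((n : ℝ) * r ^ n / (Nat.factorial n : ℝ))
        + r * (r ^ n / (Nat.factorial n : ℝ)) := by
    funext n
    have h := my_shift1 r n
    push_cast
    push_cast at h
    calc ((n:ℝ)+1)^2 * r^(n+1)/(Nat.factorial (n+1) : ℝ)
        = ((n:ℝ)+1) * (((n:ℝ)+1)*r^(n+1)/(Nat.factorial (n+1) : ℝ)) := by ring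
      _ = ((n:ℝ)+1) * (r * (r^n/(Nat.factorial n : ℝ))) := by rw [h]
      _ = r * ((n:ℝ)*r^n/(Nat.factorial n : ℝ)) + r * (r^n/(Nat.factorial n : ℝ)) := by ring
  rw [this, Summable.tsum_add (((my_summable1 r).mul_left r)) ((Real.summable_pow_div_factorial r).mul_left r),
    tsum_mul_left, tsum_mul_left, my_tsum1, my_tsum_exp]
  ring

lemma my_shift_eq (a r : ℝ) : (fun k : ℕ => ((k : ℝ) + a) ^ 2 * r ^ k / (Nat.factorial k : ℝ)) =
    fun k : ℕ => (k : ℝ) ^ 2 * r ^ k / (Nat.factorial k : ℝ)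
      + (2 * a) * ((k : ℝ) * r ^ k / (Nat.factorial k : ℝ))
      + a ^ 2 * (r ^ k / (Nat.factorial k : ℝ)) := by
  funext k; field_simp; ring

lemma my_summable_shift (a r : ℝ) :
    Summable (fun k : ℕ => ((k : ℝ) + a) ^ 2 * r ^ k / (Nat.factorial k : ℝ)) := by
  rw [my_shift_eq]
  exact ((my_summable2 r).add ((my_summable1 r).mul_left _)).add
    ((Real.summable_pow_div_factorial r).mul_left _)

lemma my_tsum_shift (a r : ℝ) :
    ∑' k : ℕ, ((k : ℝ) + a) ^ 2 * r ^ k / (Nat.factorial k : ℝ) =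
      (r ^ 2 + (2 * a + 1) * r + a ^ 2) * Real.exp r := by
  rw [my_shift_eq,
    Summable.tsum_add ((my_summable2 r).add ((my_summable1 r).mul_left _))
      ((Real.summable_pow_div_factorial r).mul_left _),
    Summable.tsum_add (my_summable2 r) ((my_summable1 r).mul_left _),
    tsum_mul_left, tsum_mul_left, my_tsum2, my_tsum1, my_tsum_exp]
  ring

-- Bernstein moments
lemma bern_sum0 (m : ℕ) (x : ℝ) :
    ∑ ν ∈ Finset.range (m + 1), (m.choose ν : ℝ) * x ^ ν * (1 - x) ^ (m - ν) = 1 := by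
  have h := congrArg (Polynomial.eval x) (bernsteinPolynomial.sum ℝ m)
  simpa [bernsteinPolynomial, Polynomial.eval_finset_sum, mul_comm, mul_assoc, mul_left_comm]
    using h

lemma bern_sum1 (m : ℕ) (x : ℝ) :
    ∑ ν ∈ Finset.range (m + 1), (ν : ℝ) * ((m.choose ν : ℝ) * x ^ ν * (1 - x) ^ (m - ν)) =
      (m : ℝ) * x := by
  have h := congrArg (Polynomial.eval x) (bernsteinPolynomial.sum_smul ℝ m)
  simp only [Polynomial.eval_finset_sum, Polynomial.eval_smul, 
    bernsteinPolynomial, Polynomial.eval_mul, Polynomial.eval_pow, Polynomial.eval_natCast,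
    Polynomial.eval_X, Polynomial.eval_sub, Polynomial.eval_one, nsmul_eq_mul, smul_eq_mul] at h
  convert h using 2 with ν
  try ring

lemma bern_sum2 (m : ℕ) (x : ℝ) :
    ∑ ν ∈ Finset.range (m + 1), (ν : ℝ) ^ 2 * ((m.choose ν : ℝ) * x ^ ν * (1 - x) ^ (m - ν)) =
      (m : ℝ) * x + ((m : ℝ) ^ 2 - m) * x ^ 2 := by
  have key : ∀ j : ℕ, ((j * (j - 1) : ℕ) : ℝ) = (j : ℝ) ^ 2 - j := by
    intro j
    cases j with
    | zero => simp
    | succ k => push_cast [Nat.succ_sub_one]; ring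
  have h := congrArg (Polynomial.eval x) (bernsteinPolynomial.sum_mul_smul ℝ m)
  simp only [Polynomial.eval_finset_sum, Polynomial.eval_smul, 
    bernsteinPolynomial, Polynomial.eval_mul, Polynomial.eval_pow, Polynomial.eval_natCast,
    Polynomial.eval_X, Polynomial.eval_sub, Polynomial.eval_one, nsmul_eq_mul, smul_eq_mul] at h
  have h2 : ∑ ν ∈ Finset.range (m + 1),
      ((ν : ℝ) ^ 2 - ν) * ((m.choose ν : ℝ) * x ^ ν * (1 - x) ^ (m - ν)) =
      ((m : ℝ) ^ 2 - m) * x ^ 2 := by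
    rw [← key m]
    rw [← h]
    apply Finset.sum_congr rfl
    intro ν _
    rw [← key ν]
    try ring
  have h1 := bern_sum1 m x
  have expand : ∑ ν ∈ Finset.range (m + 1),
      (ν : ℝ) ^ 2 * ((m.choose ν : ℝ) * x ^ ν * (1 - x) ^ (m - ν)) =
      (∑ ν ∈ Finset.range (m + 1),
        ((ν : ℝ) ^ 2 - ν) * ((m.choose ν : ℝ) * x ^ ν * (1 - x) ^ (m - ν)))
      + ∑ ν ∈ Finset.range (m + 1),
        (ν : ℝ) * ((m.choose ν : ℝ) * x ^ ν * (1 - x) ^ (m - ν)) := by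
    rw [← Finset.sum_add_distrib]
    apply Finset.sum_congr rfl
    intro ν _; ring
  rw [expand, h2, h1]; ring

/-- The bivariate Stancu–Szász type operator of the paper:
`L α₁ β₁ α₂ β₂ m n f x y = ∑_{k≥0} ∑_{ν=0}^m C(m,ν) x^ν (1-x)^{m-ν} e^{-ny}(ny)^k/k! ·
  f((ν+α₁)/(m+β₁), (k+α₂)/(n+β₂))`. -/
noncomputable def L (α₁ β₁ α₂ β₂ : ℝ) (m n : ℕ) (f : ℝ → ℝ → ℝ) (x y : ℝ) : ℝ :=
  ∑' k : ℕ, ∑ ν ∈ Finset.range (m + 1),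
    ((m.choose ν : ℝ) * x ^ ν * (1 - x) ^ (m - ν)) *
      (Real.exp (-(n * y)) * (n * y) ^ k / (Nat.factorial k : ℝ)) *
      f ((ν + α₁) / (m + β₁)) ((k + α₂) / (n + β₂))


lemma L_eval (α₁ β₁ α₂ β₂ : ℝ) (m n : ℕ) (x y : ℝ) :
    L α₁ β₁ α₂ β₂ m n (fun t τ => t ^ 2 + τ ^ 2) x y =
      (((m : ℝ) ^ 2 - m) * x ^ 2 + (2 * α₁ + 1) * m * x + α₁ ^ 2) / ((m : ℝ) + β₁) ^ 2 +
      (((n : ℝ) * y) ^ 2 + (2 * α₂ + 1) * ((n : ℝ) * y) + α₂ ^ 2) / ((n : ℝ) + β₂) ^ 2 := by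
  have hexp : Real.exp (-((n : ℝ) * y)) * Real.exp ((n : ℝ) * y) = 1 := by
    rw [Real.exp_neg]; exact inv_mul_cancel₀ (Real.exp_ne_zero _)
  set r : ℝ := (n : ℝ) * y with hr
  set p : ℕ → ℝ := fun ν => (m.choose ν : ℝ) * x ^ ν * (1 - x) ^ (m - ν) with hp
  have hfun : ∀ ν : ℕ, (fun k : ℕ =>
      p ν * (Real.exp (-r) * r ^ k / (Nat.factorial k : ℝ)) *
        ((((ν : ℝ) + α₁) / ((m : ℝ) + β₁)) ^ 2 + (((k : ℝ) + α₂) / ((n : ℝ) + β₂)) ^ 2)) =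
      fun k : ℕ =>
        (p ν * Real.exp (-r) * (((ν : ℝ) + α₁) / ((m : ℝ) + β₁)) ^ 2) *
            (r ^ k / (Nat.factorial k : ℝ)) +
          (p ν * Real.exp (-r) * (((n : ℝ) + β₂) ^ 2)⁻¹) *
            (((k : ℝ) + α₂) ^ 2 * r ^ k / (Nat.factorial k : ℝ)) := by
    intro ν; funext k
    rw [div_pow ((k : ℝ) + α₂)]
    ring
  have hsum : ∀ ν : ℕ, Summable (fun k : ℕ =>
      p ν * (Real.exp (-r) * r ^ k / (Nat.factorial k : ℝ)) *
        ((((ν : ℝ) + α₁) / ((m : ℝ) + β₁)) ^ 2 + (((k : ℝ) + α₂) / ((n : ℝ) + β₂)) ^ 2)) := by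
    intro ν
    rw [hfun ν]
    exact ((Real.summable_pow_div_factorial r).mul_left _).add
      ((my_summable_shift α₂ r).mul_left _)
  unfold L
  rw [Summable.tsum_finsetSum (fun ν _ => hsum ν)]
  have hinner : ∀ ν ∈ Finset.range (m + 1), (∑' k : ℕ,
      p ν * (Real.exp (-r) * r ^ k / (Nat.factorial k : ℝ)) *
        ((((ν : ℝ) + α₁) / ((m : ℝ) + β₁)) ^ 2 + (((k : ℝ) + α₂) / ((n : ℝ) + β₂)) ^ 2)) =
      p ν * (((ν : ℝ) + α₁) / ((m : ℝ) + β₁)) ^ 2 +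
        p ν * ((r ^ 2 + (2 * α₂ + 1) * r + α₂ ^ 2) / ((n : ℝ) + β₂) ^ 2) := by
    intro ν _
    rw [hfun ν, Summable.tsum_add ((Real.summable_pow_div_factorial r).mul_left _)
      ((my_summable_shift α₂ r).mul_left _), tsum_mul_left, tsum_mul_left,
      my_tsum_exp, my_tsum_shift]
    rw [div_eq_mul_inv (r ^ 2 + (2 * α₂ + 1) * r + α₂ ^ 2)]
    linear_combination (p ν * (((ν : ℝ) + α₁) / ((m : ℝ) + β₁)) ^ 2 +
      p ν * (((n : ℝ) + β₂) ^ 2)⁻¹ * (r ^ 2 + (2 * α₂ + 1) * r + α₂ ^ 2)) * hexp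
  rw [Finset.sum_congr rfl hinner, Finset.sum_add_distrib, ← Finset.sum_mul]
  simp only [hp]
  rw [bern_sum0, one_mul]
  have hA : ∑ ν ∈ Finset.range (m + 1),
      ((m.choose ν : ℝ) * x ^ ν * (1 - x) ^ (m - ν)) * (((ν : ℝ) + α₁) / ((m : ℝ) + β₁)) ^ 2 =
      (((m : ℝ) ^ 2 - m) * x ^ 2 + (2 * α₁ + 1) * m * x + α₁ ^ 2) / ((m : ℝ) + β₁) ^ 2 := by
    have hterm : ∀ ν ∈ Finset.range (m + 1),
        ((m.choose ν : ℝ) * x ^ ν * (1 - x) ^ (m - ν)) * (((ν : ℝ) + α₁) / ((m : ℝ) + β₁)) ^ 2 =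
        ((ν : ℝ) ^ 2 * ((m.choose ν : ℝ) * x ^ ν * (1 - x) ^ (m - ν)) +
          (2 * α₁) * ((ν : ℝ) * ((m.choose ν : ℝ) * x ^ ν * (1 - x) ^ (m - ν))) +
          α₁ ^ 2 * ((m.choose ν : ℝ) * x ^ ν * (1 - x) ^ (m - ν))) * (((m : ℝ) + β₁) ^ 2)⁻¹ := by
      intro ν _
      rw [div_pow]
      ring
    rw [Finset.sum_congr rfl hterm, ← Finset.sum_mul, Finset.sum_add_distrib,
      Finset.sum_add_distrib, ← Finset.mul_sum, ← Finset.mul_sum,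
      bern_sum2, bern_sum1, bern_sum0, div_eq_mul_inv]
    ring
  rw [hA]

lemma aux_bound (a b : ℝ) (ha : 0 ≤ a) (hb : a ≤ b) (M : ℕ) (hM : 1 ≤ M) (u : ℝ)
    (hu0 : 0 ≤ u) (hu1 : u ≤ 1) :
    |(((M : ℝ) ^ 2 - M) * u ^ 2 + (2 * a + 1) * M * u + a ^ 2) / ((M : ℝ) + b) ^ 2 - u ^ 2| ≤
      (2 * b + 2 * a + 2 + b ^ 2 + a ^ 2) / M := by
  have hb0 : 0 ≤ b := ha.trans hb
  have hM1 : (1 : ℝ) ≤ (M : ℝ) := by exact_mod_cast hM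
  have hM0 : (0 : ℝ) < (M : ℝ) := by linarith
  have hA : (0 : ℝ) < (M : ℝ) + b := by linarith
  have heq : (((M : ℝ) ^ 2 - M) * u ^ 2 + (2 * a + 1) * M * u + a ^ 2) / ((M : ℝ) + b) ^ 2 -
      u ^ 2 = (-(((2 * b + 1) * M + b ^ 2)) * u ^ 2 + (2 * a + 1) * M * u + a ^ 2) /
        ((M : ℝ) + b) ^ 2 := by
    field_simp
    ring
  rw [heq, abs_div, abs_of_pos (pow_pos hA 2)]
  have h1 : |(-(((2 * b + 1) * M + b ^ 2)) * u ^ 2 + (2 * a + 1) * M * u + a ^ 2)| ≤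
      (2 * b + 2 * a + 2 + b ^ 2 + a ^ 2) * M := by
    rw [abs_le]
    constructor
    · nlinarith [mul_nonneg (add_nonneg (mul_nonneg (by linarith : (0:ℝ) ≤ 2*b+1) hM0.le)
        (sq_nonneg b)) (by nlinarith : (0:ℝ) ≤ 1 - u^2),
        mul_nonneg (mul_nonneg (by linarith : (0:ℝ) ≤ 2*a+1) hM0.le) hu0,
        sq_nonneg a, mul_nonneg (sq_nonneg b) (by linarith : (0:ℝ) ≤ (M:ℝ) - 1),
        mul_nonneg (by nlinarith : (0:ℝ) ≤ 2*a+1+a^2) hM0.le]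
    · nlinarith [mul_nonneg (add_nonneg (mul_nonneg (by linarith : (0:ℝ) ≤ 2*b+1) hM0.le)
        (sq_nonneg b)) (sq_nonneg u),
        mul_nonneg (mul_nonneg (by linarith : (0:ℝ) ≤ 2*a+1) hM0.le)
          (by linarith : (0:ℝ) ≤ 1 - u),
        mul_nonneg (sq_nonneg a) (by linarith : (0:ℝ) ≤ (M:ℝ) - 1),
        mul_nonneg (by nlinarith : (0:ℝ) ≤ 2*b+b^2) hM0.le]
  have h2 : (M : ℝ) ^ 2 ≤ ((M : ℝ) + b) ^ 2 := by nlinarith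
  calc |(-(((2 * b + 1) * M + b ^ 2)) * u ^ 2 + (2 * a + 1) * M * u + a ^ 2)| /
        ((M : ℝ) + b) ^ 2
      ≤ ((2 * b + 2 * a + 2 + b ^ 2 + a ^ 2) * M) / (M : ℝ) ^ 2 := by
        apply div_le_div₀ (by nlinarith) h1 (by positivity) h2
    _ = (2 * b + 2 * a + 2 + b ^ 2 + a ^ 2) / M := by
        rw [pow_two ((M : ℝ)), mul_div_mul_right _ _ hM0.ne']

lemma aux_bound_y (a b : ℝ) (ha : 0 ≤ a) (hb : a ≤ b) (M : ℕ) (hM : 1 ≤ M) (v : ℝ)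
    (hv : 0 ≤ v) :
    |(((M : ℝ) * v) ^ 2 + (2 * a + 1) * ((M : ℝ) * v) + a ^ 2) / ((M : ℝ) + b) ^ 2 - v ^ 2| ≤
      (2 * b + 2 * a + 2 + b ^ 2 + a ^ 2) / M * (1 + v ^ 2) := by
  have hb0 : 0 ≤ b := ha.trans hb
  have hM1 : (1 : ℝ) ≤ (M : ℝ) := by exact_mod_cast hM
  have hM0 : (0 : ℝ) < (M : ℝ) := by linarith
  have hA : (0 : ℝ) < (M : ℝ) + b := by linarith
  have hv2 : v ≤ 1 + v ^ 2 := by nlinarith [sq_nonneg (v - 1)]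
  have heq : (((M : ℝ) * v) ^ 2 + (2 * a + 1) * ((M : ℝ) * v) + a ^ 2) / ((M : ℝ) + b) ^ 2 -
      v ^ 2 = (-(((2 * b) * M + b ^ 2)) * v ^ 2 + (2 * a + 1) * M * v + a ^ 2) /
        ((M : ℝ) + b) ^ 2 := by
    field_simp
    ring
  rw [heq, abs_div, abs_of_pos (pow_pos hA 2)]
  have h1 : |(-(((2 * b) * M + b ^ 2)) * v ^ 2 + (2 * a + 1) * M * v + a ^ 2)| ≤
      (2 * b + 2 * a + 2 + b ^ 2 + a ^ 2) * M * (1 + v ^ 2) := by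
    rw [abs_le]
    constructor
    · nlinarith [mul_nonneg (add_nonneg (mul_nonneg (by linarith : (0:ℝ) ≤ 2*b+1) hM0.le)
        (sq_nonneg b)) (sq_nonneg v),
        mul_nonneg (mul_nonneg (by linarith : (0:ℝ) ≤ 2*a+1) hM0.le) hv,
        mul_nonneg (mul_nonneg (by linarith : (0:ℝ) ≤ 2*a+1) hM0.le) (sq_nonneg v),
        mul_nonneg (sq_nonneg a) (by linarith : (0:ℝ) ≤ (M:ℝ) - 1),
        mul_nonneg (mul_nonneg (sq_nonneg a) hM0.le) (sq_nonneg v),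
        mul_nonneg (mul_nonneg (by nlinarith : (0:ℝ) ≤ 2*b+b^2) hM0.le)
          (by positivity : (0:ℝ) ≤ 1 + v^2),
        mul_nonneg (sq_nonneg b) (by positivity : (0:ℝ) ≤ 1 + v^2)]
    · nlinarith [mul_nonneg (mul_nonneg (by linarith : (0:ℝ) ≤ 2*a+1) hM0.le) hv,
        mul_nonneg (mul_nonneg (by linarith : (0:ℝ) ≤ 2*a+1) hM0.le)
          (by nlinarith [sq_nonneg (v-1)] : (0:ℝ) ≤ 1 + v^2 - v),
        sq_nonneg a,
        mul_nonneg (mul_nonneg (sq_nonneg a) hM0.le) (sq_nonneg v),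
        mul_nonneg (sq_nonneg a) (by linarith : (0:ℝ) ≤ (M:ℝ) - 1),
        mul_nonneg (sq_nonneg b) (by linarith : (0:ℝ) ≤ (M:ℝ) - 1),
        mul_nonneg (mul_nonneg (sq_nonneg b) hM0.le) (sq_nonneg v),
        mul_nonneg (mul_nonneg (by linarith : (0:ℝ) ≤ 2*b+1) hM0.le) (sq_nonneg v),
        mul_nonneg hM0.le (sq_nonneg v)]
  have h2 : (M : ℝ) ^ 2 ≤ ((M : ℝ) + b) ^ 2 := by nlinarith
  calc |(-(((2 * b) * M + b ^ 2)) * v ^ 2 + (2 * a + 1) * M * v + a ^ 2)| /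
        ((M : ℝ) + b) ^ 2
      ≤ ((2 * b + 2 * a + 2 + b ^ 2 + a ^ 2) * M * (1 + v ^ 2)) / (M : ℝ) ^ 2 := by
        apply div_le_div₀ (by positivity <;> nlinarith) h1 (by positivity) h2
    _ = (2 * b + 2 * a + 2 + b ^ 2 + a ^ 2) / M * (1 + v ^ 2) := by
        rw [pow_two ((M : ℝ))]
        field_simp

set_option maxHeartbeats 1000000 in
theorem L_squares_weighted_convergence (α₁ β₁ α₂ β₂ : ℝ) (hα₁ : 0 ≤ α₁) (hβ₁ : α₁ ≤ β₁)
    (hα₂ : 0 ≤ α₂) (hβ₂ : α₂ ≤ β₂) :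
    ∀ ε > (0:ℝ), ∃ N : ℕ, ∀ m n : ℕ, N ≤ m → N ≤ n →
      ∀ x ∈ Set.Icc (0:ℝ) 1, ∀ y ∈ Set.Ici (0:ℝ),
        |L α₁ β₁ α₂ β₂ m n (fun t τ => t ^ 2 + τ ^ 2) x y - (x ^ 2 + y ^ 2)| /
            (1 + x ^ 2 + y ^ 2) < ε := by
  intro ε hε
  set K₁ : ℝ := 2 * β₁ + 2 * α₁ + 2 + β₁ ^ 2 + α₁ ^ 2 with hK₁def
  set K₂ : ℝ := 2 * β₂ + 2 * α₂ + 2 + β₂ ^ 2 + α₂ ^ 2 with hK₂def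
  have hβ₁0 : 0 ≤ β₁ := hα₁.trans hβ₁
  have hβ₂0 : 0 ≤ β₂ := hα₂.trans hβ₂
  have hK₁pos : 0 < K₁ := by rw [hK₁def]; nlinarith [sq_nonneg β₁, sq_nonneg α₁]
  have hK₂pos : 0 < K₂ := by rw [hK₂def]; nlinarith [sq_nonneg β₂, sq_nonneg α₂]
  refine ⟨⌈(K₁ + K₂) / ε⌉₊ + 1, ?_⟩
  intro m n hm hn x hx y hy
  obtain ⟨hx0, hx1⟩ := hx
  have hy0 : 0 ≤ y := hy
  have hm1 : 1 ≤ m := le_trans (Nat.le_add_left 1 _) hm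
  have hn1 : 1 ≤ n := le_trans (Nat.le_add_left 1 _) hn
  have hmR : (0:ℝ) < m := by exact_mod_cast hm1
  have hnR : (0:ℝ) < n := by exact_mod_cast hn1
  -- the key quantitative bound on N
  have hNm : ((⌈(K₁ + K₂) / ε⌉₊ : ℝ) + 1) ≤ (m : ℝ) := by exact_mod_cast hm
  have hNn : ((⌈(K₁ + K₂) / ε⌉₊ : ℝ) + 1) ≤ (n : ℝ) := by exact_mod_cast hn
  have hNpos : (0:ℝ) < (⌈(K₁ + K₂) / ε⌉₊ : ℝ) + 1 := by positivity
  have hceil : (K₁ + K₂) / ε < (⌈(K₁ + K₂) / ε⌉₊ : ℝ) + 1 := by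
    have := Nat.le_ceil ((K₁ + K₂) / ε)
    linarith
  have hK : K₁ + K₂ < ((⌈(K₁ + K₂) / ε⌉₊ : ℝ) + 1) * ε := by
    rw [div_lt_iff₀ hε] at hceil
    linarith
  have hKm : K₁ / m + K₂ / n < ε := by
    have h1 : K₁ / (m : ℝ) ≤ K₁ / ((⌈(K₁ + K₂) / ε⌉₊ : ℝ) + 1) :=
      div_le_div_of_nonneg_left hK₁pos.le hNpos hNm
    have h2 : K₂ / (n : ℝ) ≤ K₂ / ((⌈(K₁ + K₂) / ε⌉₊ : ℝ) + 1) :=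
      div_le_div_of_nonneg_left hK₂pos.le hNpos hNn
    have h3 : K₁ / ((⌈(K₁ + K₂) / ε⌉₊ : ℝ) + 1) + K₂ / ((⌈(K₁ + K₂) / ε⌉₊ : ℝ) + 1) < ε := by
      rw [← add_div, div_lt_iff₀ hNpos]
      linarith
    linarith
  -- bound the deviation
  have hb1 := aux_bound α₁ β₁ hα₁ hβ₁ m hm1 x hx0 hx1
  have hb2 := aux_bound_y α₂ β₂ hα₂ hβ₂ n hn1 y hy0
  rw [← hK₁def] at hb1
  rw [← hK₂def] at hb2
  have hsplit : L α₁ β₁ α₂ β₂ m n (fun t τ => t ^ 2 + τ ^ 2) x y - (x ^ 2 + y ^ 2) =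
      ((((m : ℝ) ^ 2 - m) * x ^ 2 + (2 * α₁ + 1) * m * x + α₁ ^ 2) / ((m : ℝ) + β₁) ^ 2
        - x ^ 2) +
      ((((n : ℝ) * y) ^ 2 + (2 * α₂ + 1) * ((n : ℝ) * y) + α₂ ^ 2) / ((n : ℝ) + β₂) ^ 2
        - y ^ 2) := by
    rw [L_eval]; ring
  have habs : |L α₁ β₁ α₂ β₂ m n (fun t τ => t ^ 2 + τ ^ 2) x y - (x ^ 2 + y ^ 2)| ≤
      K₁ / m + K₂ / n * (1 + y ^ 2) := by
    rw [hsplit]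
    calc _ ≤ _ := abs_add_le _ _
      _ ≤ K₁ / m + K₂ / n * (1 + y ^ 2) := add_le_add hb1 hb2
  have hρ : (0:ℝ) < 1 + x ^ 2 + y ^ 2 := by positivity
  rw [div_lt_iff₀ hρ]
  have hK₁m : 0 ≤ K₁ / m := by positivity
  have hK₂n0 : 0 ≤ K₂ / n := by positivity
  have hK₂n : K₂ / n < ε := by linarith
  nlinarith [mul_nonneg (sub_nonneg.mpr hK₂n.le) (sq_nonneg y),
    mul_nonneg hε.le (sq_nonneg x), sq_nonneg y, sq_nonneg x]
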